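/- Let n ≥ 1 and let Θ ∈ ℝⁿ be a row-stochastic vector with all entries positive. For each integer k ≥ k₀ let P̄_k and S_k be n×n row-stochastic matrices and let W_k be the diagonal matrix with diagonal entries ω_k[i] = e^{−τk}·G_k[i], where τ > 0 and G_k[i] ∈ [0,1], and set M̄_k = (I − W_k)P̄_k + W_k S_k. Assume: (i) each P̄_k has all diagonal entries positive and Θ P̄_k = Θ; (ii) there exists an infinite sequence of non-overlapping time intervals [k_i, k_{i+1}), i = 0,1,2,…, such that on each interval the sum Σ_{k=k_i}^{k_{i+1}−1} P̄_k is irreducible; and (iii) there exists γ > 0 such that every positive entry of every product M̄_{k_i}·M̄_{k_i+1}⋯M̄_{k_{i+1}−1} over such an interval is at least γ. Then for every row-stochastic vector x_{k₀} ∈ ℝⁿ, the products x_{k₀}·M̄_{k₀}·M̄_{k₀+1}⋯M̄_{k−1} converge entrywise to Θ as k → ∞. -/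

import Mathlib

open Matrix

namespace AsyncAux
variable {n : ℕ}

def Stoch (A : Matrix (Fin n) (Fin n) ℝ) : Prop :=
  (∀ i l, 0 ≤ A i l) ∧ (∀ i, ∑ l, A i l = 1)

noncomputable def nrm (w : Fin n → ℝ) : ℝ := ∑ i, |w i|

def iProd {M : Type*} [Monoid M] (f : ℕ → M) (j k : ℕ) : M :=
  ((List.range (k - j)).map (fun t => f (j + t))).prod

theorem iProd_self {M : Type*} [Monoid M] (f : ℕ → M) (j : ℕ) : iProd f j j = 1 := by
  simp [iProd]

theorem iProd_succ {M : Type*} [Monoid M] (f : ℕ → M) {j k : ℕ} (h : j ≤ k) :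
    iProd f j (k + 1) = iProd f j k * f k := by
  have h1 : k + 1 - j = (k - j) + 1 := by omega
  rw [iProd, h1, List.range_succ, List.map_append, List.prod_append]
  have h2 : j + (k - j) = k := by omega
  simp [iProd, h2]

theorem iProd_mul {M : Type*} [Monoid M] (f : ℕ → M) {j k l : ℕ} (h1 : j ≤ k) (h2 : k ≤ l) :
    iProd f j k * iProd f k l = iProd f j l := by
  induction l, h2 using Nat.le_induction with
  | base => simp [iProd_self]
  | succ l hl ih =>
    rw [iProd_succ f hl, iProd_succ f (h1.trans hl), ← mul_assoc, ih]

theorem Stoch.one : Stoch (1 : Matrix (Fin n) (Fin n) ℝ) := by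
  constructor
  · intro i l; by_cases h : i = l <;> simp [Matrix.one_apply, h]
  · intro i; simp [Matrix.one_apply]

theorem Stoch.mul {A B : Matrix (Fin n) (Fin n) ℝ} (hA : Stoch A) (hB : Stoch B) :
    Stoch (A * B) := by
  constructor
  · intro i l
    rw [Matrix.mul_apply]
    exact Finset.sum_nonneg fun c _ => mul_nonneg (hA.1 i c) (hB.1 c l)
  · intro i
    simp only [Matrix.mul_apply]
    rw [Finset.sum_comm]
    have : ∀ c ∈ Finset.univ, ∑ l, A i c * B c l = A i c := by
      intro c _; rw [← Finset.mul_sum, hB.2 c, mul_one]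
    rw [Finset.sum_congr rfl this, hA.2 i]

theorem Stoch.iProd {f : ℕ → Matrix (Fin n) (Fin n) ℝ} {j k : ℕ} (h : j ≤ k)
    (hf : ∀ t, j ≤ t → t < k → Stoch (f t)) : Stoch (iProd f j k) := by
  induction k, h using Nat.le_induction with
  | base => rw [iProd_self]; exact Stoch.one
  | succ k hk ih =>
    rw [iProd_succ f hk]
    exact (ih fun t h1 h2 => hf t h1 (by omega)).mul (hf k hk (by omega))

theorem nrm_nonneg (w : Fin n → ℝ) : 0 ≤ nrm w :=
  Finset.sum_nonneg fun i _ => abs_nonneg _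

theorem abs_le_nrm (w : Fin n → ℝ) (i : Fin n) : |w i| ≤ nrm w :=
  Finset.single_le_sum (fun i _ => abs_nonneg (w i)) (Finset.mem_univ i)

theorem nrm_add_le (u v : Fin n → ℝ) : nrm (u + v) ≤ nrm u + nrm v := by
  rw [nrm, nrm, nrm, ← Finset.sum_add_distrib]
  exact Finset.sum_le_sum fun i _ => abs_add_le _ _

theorem sum_vecMul_eq {A : Matrix (Fin n) (Fin n) ℝ} (hA : ∀ i, ∑ l, A i l = 1)
    (w : Fin n → ℝ) : ∑ l, (w ᵥ* A) l = ∑ i, w i := by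
  simp only [Matrix.vecMul, dotProduct]
  rw [Finset.sum_comm]
  exact Finset.sum_congr rfl fun i _ => by rw [← Finset.mul_sum, hA i, mul_one]

theorem nrm_vecMul_le {A : Matrix (Fin n) (Fin n) ℝ} (hA : Stoch A) (w : Fin n → ℝ) :
    nrm (w ᵥ* A) ≤ nrm w := by
  have h1 : ∀ l, |(w ᵥ* A) l| ≤ ∑ i, |w i| * A i l := by
    intro l
    simp only [Matrix.vecMul, dotProduct]
    refine (Finset.abs_sum_le_sum_abs _ _).trans ?_
    exact Finset.sum_le_sum fun i _ => by rw [abs_mul, abs_of_nonneg (hA.1 i l)]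
  calc nrm (w ᵥ* A) ≤ ∑ l, ∑ i, |w i| * A i l := Finset.sum_le_sum fun l _ => h1 l
    _ = ∑ i, |w i| * ∑ l, A i l := by rw [Finset.sum_comm]; simp [Finset.mul_sum]
    _ = nrm w := by simp [hA.2, nrm]

theorem stoch_vec_vecMul {A : Matrix (Fin n) (Fin n) ℝ} (hA : Stoch A) {w : Fin n → ℝ}
    (hw : ∀ i, 0 ≤ w i) (hws : ∑ i, w i = 1) :
    (∀ l, 0 ≤ (w ᵥ* A) l) ∧ ∑ l, (w ᵥ* A) l = 1 := by
  constructor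
  · intro l
    simp only [Matrix.vecMul, dotProduct]
    exact Finset.sum_nonneg fun i _ => mul_nonneg (hw i) (hA.1 i l)
  · rw [sum_vecMul_eq hA.2, hws]

theorem nrm_contraction {A : Matrix (Fin n) (Fin n) ℝ} (hA : Stoch A) {c : ℝ}
    (hc : 0 ≤ c) (hAc : ∀ i l, c ≤ A i l) {w : Fin n → ℝ} (hw : ∑ i, w i = 0) :
    nrm (w ᵥ* A) ≤ (1 - n * c) * nrm w := by
  have h1 : ∀ l, |(w ᵥ* A) l| ≤ ∑ i, |w i| * (A i l - c) := by
    intro l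
    have : (w ᵥ* A) l = ∑ i, w i * (A i l - c) := by
      simp only [Matrix.vecMul, dotProduct, mul_sub, Finset.sum_sub_distrib,
        ← Finset.sum_mul, hw, zero_mul, sub_zero]
    rw [this]
    refine (Finset.abs_sum_le_sum_abs _ _).trans ?_
    refine Finset.sum_le_sum fun i _ => le_of_eq ?_
    rw [abs_mul, abs_of_nonneg (show (0:ℝ) ≤ A i l - c by linarith [hAc i l])]
  calc nrm (w ᵥ* A) ≤ ∑ l, ∑ i, |w i| * (A i l - c) := Finset.sum_le_sum fun l _ => h1 l
    _ = ∑ i, |w i| * ∑ l, (A i l - c) := by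
        rw [Finset.sum_comm]; exact Finset.sum_congr rfl fun i _ => by rw [Finset.mul_sum]
    _ = ∑ i, |w i| * (1 - n * c) := by
        refine Finset.sum_congr rfl fun i _ => ?_
        rw [Finset.sum_sub_distrib, hA.2 i, Finset.sum_const, Finset.card_univ,
          Fintype.card_fin, nsmul_eq_mul]
    _ = (1 - n * c) * nrm w := by
        rw [nrm, Finset.mul_sum]; exact Finset.sum_congr rfl fun i _ => mul_comm _ _

def Nonneg (A : Matrix (Fin n) (Fin n) ℝ) : Prop := ∀ i l, 0 ≤ A i l

theorem Nonneg.mul {A B : Matrix (Fin n) (Fin n) ℝ} (hA : Nonneg A) (hB : Nonneg B) :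
    Nonneg (A * B) := fun i l => by
  rw [Matrix.mul_apply]
  exact Finset.sum_nonneg fun c _ => mul_nonneg (hA i c) (hB c l)

theorem Nonneg.one : Nonneg (1 : Matrix (Fin n) (Fin n) ℝ) := fun i l => by
  by_cases h : i = l <;> simp [Matrix.one_apply, h]

theorem Nonneg.iProd {f : ℕ → Matrix (Fin n) (Fin n) ℝ} {j k : ℕ} (h : j ≤ k)
    (hf : ∀ t, j ≤ t → t < k → Nonneg (f t)) : Nonneg (iProd f j k) := by
  induction k, h using Nat.le_induction with
  | base => rw [iProd_self]; exact Nonneg.one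
  | succ k hk ih =>
    rw [iProd_succ f hk]
    exact (ih fun t h1 h2 => hf t h1 (by omega)).mul (hf k hk (by omega))

/-- entry lower bound for products: (A*B) a b ≥ A a c * B c b -/
theorem mul_entry_ge {A B : Matrix (Fin n) (Fin n) ℝ} (hA : Nonneg A) (hB : Nonneg B)
    (a c b : Fin n) : A a c * B c b ≤ (A * B) a b := by
  rw [Matrix.mul_apply]
  exact Finset.single_le_sum (fun d _ => mul_nonneg (hA a d) (hB d b)) (Finset.mem_univ c)

theorem iProd_diag_pos {f : ℕ → Matrix (Fin n) (Fin n) ℝ} {j k : ℕ} (h : j ≤ k)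
    (hf : ∀ t, j ≤ t → t < k → Nonneg (f t) ∧ ∀ a, 0 < f t a a) (a : Fin n) :
    0 < iProd f j k a a := by
  induction k, h using Nat.le_induction with
  | base => rw [iProd_self]; simp [Matrix.one_apply]
  | succ k hk ih =>
    rw [iProd_succ f hk]
    have h1 := ih fun t h1 h2 => hf t h1 (by omega)
    have h2 := hf k hk (by omega)
    calc (0:ℝ) < iProd f j k a a * f k a a := mul_pos h1 (h2.2 a)
      _ ≤ _ := mul_entry_ge (Nonneg.iProd hk fun t ht1 ht2 => (hf t ht1 (by omega)).1) h2.1 a a a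

theorem iProd_entry_pos_of_exists {f : ℕ → Matrix (Fin n) (Fin n) ℝ} {j k : ℕ} (h : j ≤ k)
    (hf : ∀ t, j ≤ t → t < k → Nonneg (f t) ∧ ∀ a, 0 < f t a a)
    {a b : Fin n} {t : ℕ} (ht1 : j ≤ t) (ht2 : t < k) (ht : 0 < f t a b) :
    0 < iProd f j k a b := by
  induction k, h using Nat.le_induction with
  | base => omega
  | succ k hk ih =>
    rw [iProd_succ f hk]
    have hfk := hf k hk (by omega)
    have hQnn : Nonneg (iProd f j k) := Nonneg.iProd hk fun s h1 h2 => (hf s h1 (by omega)).1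
    rcases Nat.lt_or_ge t k with hlt | hge
    · have h1 := ih (fun s h1 h2 => hf s h1 (by omega)) hlt
      calc (0:ℝ) < iProd f j k a b * f k b b := mul_pos h1 (hfk.2 b)
        _ ≤ _ := mul_entry_ge hQnn hfk.1 a b b
    · have htk : t = k := by omega
      subst htk
      have h1 : 0 < iProd f j t a a := iProd_diag_pos hk (fun s h1 h2 => hf s h1 (by omega)) a
      calc (0:ℝ) < iProd f j t a a * f t a b := mul_pos h1 ht
        _ ≤ _ := mul_entry_ge hQnn hfk.1 a a b

theorem iProd_gamma_lb {f : ℕ → Matrix (Fin n) (Fin n) ℝ} {γ : ℝ} (hγ : 0 ≤ γ) {j k : ℕ}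
    (h : j ≤ k)
    (hf : ∀ t, j ≤ t → t < k → Nonneg (f t) ∧ ∀ a b, 0 < f t a b → γ ≤ f t a b) :
    ∀ a b : Fin n, 0 < iProd f j k a b → γ ^ (k - j) ≤ iProd f j k a b := by
  induction k, h using Nat.le_induction with
  | base =>
    intro a b hpos
    rw [iProd_self] at hpos ⊢
    rw [Nat.sub_self, pow_zero]
    rcases eq_or_ne a b with rfl | hne
    · simp [Matrix.one_apply]
    · simp [Matrix.one_apply, hne] at hpos
  | succ k hk ih =>
    intro a b hpos
    have hsub : k + 1 - j = (k - j) + 1 := by omega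
    rw [iProd_succ f hk] at hpos ⊢
    rw [hsub, pow_succ]
    have hQnn : Nonneg (iProd f j k) := Nonneg.iProd hk fun s h1 h2 => (hf s h1 (by omega)).1
    have hfk := hf k hk (by omega)
    rw [Matrix.mul_apply] at hpos
    have hpos' : ∑ c : Fin n, (0:ℝ) < ∑ c : Fin n, iProd f j k a c * f k c b := by
      simpa using hpos
    obtain ⟨c, _, hc⟩ := Finset.exists_lt_of_sum_lt hpos'
    have hc1 : 0 < iProd f j k a c := by
      rcases lt_or_ge 0 (iProd f j k a c) with h' | h'
      · exact h'
      · exfalso; nlinarith [hfk.1 c b, hQnn a c]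
    have hc2 : 0 < f k c b := by
      rcases lt_or_ge 0 (f k c b) with h' | h'
      · exact h'
      · exfalso; nlinarith [hfk.1 c b, hQnn a c]
    have h1 := ih (fun s hs1 hs2 => hf s hs1 (by omega)) a c hc1
    have h2 := hfk.2 c b hc2
    calc γ ^ (k - j) * γ ≤ iProd f j k a c * f k c b :=
          mul_le_mul h1 h2 hγ (le_of_lt hc1)
      _ ≤ _ := mul_entry_ge hQnn hfk.1 a c b

def Connected (A : Matrix (Fin n) (Fin n) ℝ) : Prop :=
  ∀ R : Finset (Fin n), R.Nonempty → R ≠ Finset.univ → ∃ u ∈ R, ∃ v, v ∉ R ∧ 0 < A u v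

theorem pow_nonneg' {A : Matrix (Fin n) (Fin n) ℝ} (hA : Nonneg A) (m : ℕ) :
    Nonneg (A ^ m) := by
  induction m with
  | zero => intro i l; by_cases h : i = l <;> simp [pow_zero, Matrix.one_apply, h]
  | succ m ih =>
    rw [pow_succ]
    intro i l
    rw [Matrix.mul_apply]
    exact Finset.sum_nonneg fun c _ => mul_nonneg (ih i c) (hA c l)

/-- crossing edge lemma: a positive entry of a power from inside `R` to outside `R`
yields a crossing edge. -/
theorem crossing_of_pow {A : Matrix (Fin n) (Fin n) ℝ} (hA : Nonneg A) :
    ∀ m : ℕ, ∀ (R : Finset (Fin n)) (c d : Fin n), c ∈ R → d ∉ R → 0 < (A ^ m) c d →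
      ∃ u ∈ R, ∃ v, v ∉ R ∧ 0 < A u v := by
  intro m
  induction m with
  | zero =>
    intro R c d hc hd hpos
    rw [pow_zero] at hpos
    have : c ≠ d := fun h => hd (h ▸ hc)
    simp [Matrix.one_apply, this] at hpos
  | succ m ih =>
    intro R c d hc hd hpos
    rw [pow_succ'] at hpos
    rw [Matrix.mul_apply] at hpos
    have hpos' : ∑ e : Fin n, (0:ℝ) < ∑ e : Fin n, A c e * (A ^ m) e d := by simpa using hpos
    obtain ⟨e, _, he⟩ := Finset.exists_lt_of_sum_lt hpos'
    have h1 : 0 < A c e := by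
      rcases lt_or_ge 0 (A c e) with h' | h'
      · exact h'
      · exfalso; nlinarith [hA c e, pow_nonneg' hA m e d]
    have h2 : 0 < (A ^ m) e d := by
      rcases lt_or_ge 0 ((A ^ m) e d) with h' | h'
      · exact h'
      · exfalso; nlinarith [hA c e, pow_nonneg' hA m e d]
    by_cases he' : e ∈ R
    · exact ih R e d he' hd h2
    · exact ⟨c, hc, e, he', h1⟩

theorem reach_card {A : ℕ → Matrix (Fin n) (Fin n) ℝ} {p q : ℕ} (h : p ≤ q)
    (hA : ∀ i, p ≤ i → i < q → Nonneg (A i) ∧ (∀ a, 0 < A i a a) ∧ Connected (A i))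
    (a : Fin n) :
    min n (q - p + 1) ≤ (Finset.univ.filter (fun b => 0 < iProd A p q a b)).card := by
  induction q, h using Nat.le_induction with
  | base =>
    have : (Finset.univ.filter (fun b => 0 < iProd A p p a b)) = {a} := by
      ext b
      rw [iProd_self]
      rcases eq_or_ne a b with rfl | hne
      · rw [Finset.mem_filter, Finset.mem_singleton, Matrix.one_apply_eq]; simp
      · rw [Finset.mem_filter, Finset.mem_singleton, Matrix.one_apply_ne hne]; simp [Ne.symm hne]
    rw [this, Finset.card_singleton]
    omega
  | succ q hq ih =>
    have hA' : ∀ i, p ≤ i → i < q → Nonneg (A i) ∧ (∀ a, 0 < A i a a) ∧ Connected (A i) :=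
      fun i h1 h2 => hA i h1 (by omega)
    have hAq := hA q hq (by omega)
    have hQnn : Nonneg (iProd A p q) := Nonneg.iProd hq fun i h1 h2 => (hA' i h1 h2).1
    set R := Finset.univ.filter (fun b => 0 < iProd A p q a b) with hR
    set R' := Finset.univ.filter (fun b => 0 < iProd A p (q+1) a b) with hR'
    have hmem : ∀ b, b ∈ R ↔ 0 < iProd A p q a b := by
      intro b; simp [hR]
    have hmem' : ∀ b, b ∈ R' ↔ 0 < iProd A p (q+1) a b := by
      intro b; simp [hR']
    have hsub : R ⊆ R' := by
      intro b hb
      rw [hmem] at hb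
      rw [hmem', iProd_succ A hq]
      calc (0:ℝ) < iProd A p q a b * A q b b := mul_pos hb (hAq.2.1 b)
        _ ≤ _ := mul_entry_ge hQnn hAq.1 a b b
    have hcard := ih hA'
    by_cases huniv : R = Finset.univ
    · have : R' = Finset.univ := Finset.eq_univ_of_forall fun b => hsub (huniv ▸ Finset.mem_univ b)
      rw [this, Finset.card_univ, Fintype.card_fin]
      omega
    · have hane : R.Nonempty := ⟨a, (hmem a).2 (iProd_diag_pos hq (fun i h1 h2 => ⟨(hA' i h1 h2).1, (hA' i h1 h2).2.1⟩) a)⟩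
      obtain ⟨u, hu, v, hv, huv⟩ := hAq.2.2 R hane huniv
      have hvR' : v ∈ R' := by
        rw [hmem', iProd_succ A hq]
        calc (0:ℝ) < iProd A p q a u * A q u v := mul_pos ((hmem u).1 hu) huv
          _ ≤ _ := mul_entry_ge hQnn hAq.1 a u v
      have h1 : R.card + 1 ≤ R'.card := by
        have : insert v R ⊆ R' := by
          intro b hb
          rcases Finset.mem_insert.1 hb with rfl | hb
          · exact hvR'
          · exact hsub hb
        calc R.card + 1 = (insert v R).card := (Finset.card_insert_of_notMem hv).symm
          _ ≤ R'.card := Finset.card_le_card this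
      have hcardle : R.card ≤ n := by
        calc R.card ≤ Finset.univ.card := Finset.card_le_card (Finset.subset_univ R)
          _ = n := by rw [Finset.card_univ, Fintype.card_fin]
      have hRne : R.card < n := by
        rcases lt_or_eq_of_le hcardle with h' | h'
        · exact h'
        · exfalso
          exact huniv (Finset.eq_univ_of_card R (by rw [h', Fintype.card_fin]))
      omega

theorem iProd_all_pos {A : ℕ → Matrix (Fin n) (Fin n) ℝ} {p q : ℕ} (h : p ≤ q)
    (hn : n ≤ q - p + 1)
    (hA : ∀ i, p ≤ i → i < q → Nonneg (A i) ∧ (∀ a, 0 < A i a a) ∧ Connected (A i))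
    (a b : Fin n) : 0 < iProd A p q a b := by
  have h1 := reach_card h hA a
  rw [min_eq_left hn] at h1
  have h2 : (Finset.univ.filter (fun c => 0 < iProd A p q a c)) = Finset.univ := by
    apply Finset.eq_univ_of_card
    rw [Fintype.card_fin]
    refine le_antisymm ?_ h1
    calc _ ≤ Finset.univ.card := Finset.card_le_card (Finset.subset_univ _)
      _ = n := by rw [Finset.card_univ, Fintype.card_fin]
  have := Finset.mem_filter.1 (h2 ▸ Finset.mem_univ b)
  exact this.2

theorem iProd_comp {M : Type*} [Monoid M] (f : ℕ → M) (κ : ℕ → ℕ) (hκ : Monotone κ)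
    {p q : ℕ} (h : p ≤ q) :
    iProd (fun i => iProd f (κ i) (κ (i + 1))) p q = iProd f (κ p) (κ q) := by
  induction q, h using Nat.le_induction with
  | base => rw [iProd_self, iProd_self]
  | succ q hq ih =>
    rw [iProd_succ _ hq, ih, iProd_mul f (hκ hq) (hκ (by omega))]

end AsyncAux

open AsyncAux


open Matrix

/-- Asynchronous convergence: with `M̄ k = (I - W k) * P̄ k + W k * S k`,
where every `P̄ k` is row-stochastic with positive diagonal and `Θ P̄ k = Θ`, and with an
infinite sequence of non-overlapping intervals `[κ i, κ (i+1))` on each of which the sum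
of the `P̄ k` is irreducible and every positive entry of the corresponding product of the
`M̄ k` is at least `γ > 0`, every row-stochastic initial vector `x` satisfies
`x ᵥ* M̄ k₀ * ⋯ * M̄ (k-1) → Θ` entrywise as `k → ∞`. -/
theorem asynchronous_swarm_convergence
    (n : ℕ) (hn : 1 ≤ n)
    (Θ : Fin n → ℝ) (hΘpos : ∀ i, 0 < Θ i) (hΘsum : ∑ i, Θ i = 1)
    (k₀ : ℕ) (τ : ℝ) (hτ : 0 < τ)
    (Pbar S : ℕ → Matrix (Fin n) (Fin n) ℝ)
    (hPnn : ∀ k, k₀ ≤ k → ∀ i l, 0 ≤ Pbar k i l)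
    (hProw : ∀ k, k₀ ≤ k → ∀ i, ∑ l, Pbar k i l = 1)
    (hSnn : ∀ k, k₀ ≤ k → ∀ i l, 0 ≤ S k i l)
    (hSrow : ∀ k, k₀ ≤ k → ∀ i, ∑ l, S k i l = 1)
    (G : ℕ → Fin n → ℝ)
    (hG : ∀ k i, 0 ≤ G k i ∧ G k i ≤ 1)
    (ω : ℕ → Fin n → ℝ)
    (hω : ∀ k i, ω k i = Real.exp (-(τ * (k : ℝ))) * G k i)
    (Mbar : ℕ → Matrix (Fin n) (Fin n) ℝ)
    (hM : ∀ k, k₀ ≤ k →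
      Mbar k = (1 - Matrix.diagonal (ω k)) * Pbar k + Matrix.diagonal (ω k) * S k)
    -- (i) positive diagonal and stationarity of `Θ` for every `P̄ k`
    (hPdiag : ∀ k, k₀ ≤ k → ∀ i, 0 < Pbar k i i)
    (hPstat : ∀ k, k₀ ≤ k → Θ ᵥ* Pbar k = Θ)
    -- (ii) an infinite sequence of non-overlapping intervals `[κ i, κ (i+1))` on each of
    -- which the sum of the `P̄ k` is irreducible
    (κ : ℕ → ℕ) (hκmono : StrictMono κ) (hκ0 : k₀ ≤ κ 0)
    (hirr : ∀ i : ℕ, ∀ a b : Fin n, ∃ m : ℕ, 0 < m ∧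
      0 < ((∑ k ∈ Finset.Ico (κ i) (κ (i + 1)), Pbar k) ^ m) a b)
    -- (iii) uniform positive lower bound on positive entries of the interval products
    (γ : ℝ) (hγ : 0 < γ)
    (hγlb : ∀ i : ℕ, ∀ a b : Fin n,
      0 < (((List.range (κ (i + 1) - κ i)).map (fun t => Mbar (κ i + t))).prod) a b →
      γ ≤ (((List.range (κ (i + 1) - κ i)).map (fun t => Mbar (κ i + t))).prod) a b)
    (x : Fin n → ℝ) (hxnn : ∀ i, 0 ≤ x i) (hxsum : ∑ i, x i = 1) :
    ∀ i, Filter.Tendsto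
      (fun k : ℕ =>
        (x ᵥ* ((List.range (k - k₀)).map (fun t => Mbar (k₀ + t))).prod) i)
      Filter.atTop (nhds (Θ i)) := by
  classical
  set q : ℝ := Real.exp (-τ) with hqdef
  have hq0 : 0 < q := Real.exp_pos _
  have hq1 : q < 1 := Real.exp_lt_one_iff.mpr (by linarith)
  have hκle : ∀ {a b : ℕ}, a ≤ b → κ a ≤ κ b := fun h => hκmono.monotone h
  -- basic ω facts
  have hω0 : ∀ k i, 0 ≤ ω k i := fun k i => by
    rw [hω]; exact mul_nonneg (Real.exp_pos _).le (hG k i).1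
  have hωq : ∀ (k : ℕ) i, ω k i ≤ q ^ k := fun k i => by
    rw [hω]
    calc Real.exp (-(τ * k)) * G k i ≤ Real.exp (-(τ * k)) * 1 :=
          mul_le_mul_of_nonneg_left (hG k i).2 (Real.exp_pos _).le
      _ = q ^ k := by rw [mul_one, hqdef, ← Real.exp_nat_mul]; ring_nf
  have hω1 : ∀ k i, ω k i ≤ 1 := fun k i =>
    (hωq k i).trans (pow_le_one₀ hq0.le hq1.le)
  have hωlt : ∀ k, 1 ≤ k → ∀ i, ω k i < 1 := fun k hk i =>
    lt_of_le_of_lt (hωq k i) (pow_lt_one₀ hq0.le hq1 (by omega))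
  -- entrywise formula for Mbar
  have hMe : ∀ k, k₀ ≤ k → ∀ i l,
      Mbar k i l = (1 - ω k i) * Pbar k i l + ω k i * S k i l := by
    intro k hk i l
    rw [hM k hk]
    simp only [Matrix.add_apply, Matrix.sub_mul, Matrix.sub_apply, Matrix.one_mul,
      Matrix.diagonal_mul]
    ring
  -- Mbar is stochastic
  have hMs : ∀ k, k₀ ≤ k → Stoch (Mbar k) := by
    intro k hk
    constructor
    · intro i l
      rw [hMe k hk]
      have h1 := hω1 k i
      exact add_nonneg (mul_nonneg (by linarith) (hPnn k hk i l))
        (mul_nonneg (hω0 k i) (hSnn k hk i l))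
    · intro i
      simp only [hMe k hk]
      rw [Finset.sum_add_distrib, ← Finset.mul_sum, ← Finset.mul_sum,
        hProw k hk i, hSrow k hk i]
      ring
  have hMnn : ∀ k, k₀ ≤ k → AsyncAux.Nonneg (Mbar k) := fun k hk => (hMs k hk).1
  -- positive diagonal and edges for k ≥ 1
  have hMdiag : ∀ k, k₀ ≤ k → 1 ≤ k → ∀ i, 0 < Mbar k i i := by
    intro k hk hk1 i
    rw [hMe k hk]
    have h1 : 0 < 1 - ω k i := by linarith [hωlt k hk1 i]
    exact add_pos_of_pos_of_nonneg (mul_pos h1 (hPdiag k hk i))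
      (mul_nonneg (hω0 k i) (hSnn k hk i i))
  have hMedge : ∀ k, k₀ ≤ k → 1 ≤ k → ∀ i l, 0 < Pbar k i l → 0 < Mbar k i l := by
    intro k hk hk1 i l hP
    rw [hMe k hk]
    have h1 : 0 < 1 - ω k i := by linarith [hωlt k hk1 i]
    exact add_pos_of_pos_of_nonneg (mul_pos h1 hP)
      (mul_nonneg (hω0 k i) (hSnn k hk i l))
  -- one-step error
  have hstep : ∀ k, k₀ ≤ k → nrm (Θ ᵥ* Mbar k - Θ) ≤ 2 * q ^ k := by
    intro k hk
    have hentry : ∀ l, (Θ ᵥ* Mbar k - Θ) l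
        = ∑ i, Θ i * (ω k i * (S k i l - Pbar k i l)) := by
      intro l
      have hPst := congrFun (hPstat k hk) l
      simp only [Matrix.vecMul, dotProduct] at hPst
      simp only [Pi.sub_apply, Matrix.vecMul, dotProduct, ← hPst,
        ← Finset.sum_sub_distrib]
      refine Finset.sum_congr rfl fun i _ => ?_
      rw [hMe k hk]
      ring
    have habs : ∀ l, |(Θ ᵥ* Mbar k - Θ) l|
        ≤ ∑ i, Θ i * (ω k i * (S k i l + Pbar k i l)) := by
      intro l
      rw [hentry l]
      refine (Finset.abs_sum_le_sum_abs _ _).trans (Finset.sum_le_sum fun i _ => ?_)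
      rw [abs_mul, abs_mul, abs_of_nonneg (hΘpos i).le, abs_of_nonneg (hω0 k i)]
      have h1 : |S k i l - Pbar k i l| ≤ S k i l + Pbar k i l := by
        refine abs_le.mpr ⟨?_, ?_⟩
        · linarith [hSnn k hk i l, hPnn k hk i l]
        · linarith [hSnn k hk i l, hPnn k hk i l]
      exact mul_le_mul_of_nonneg_left
        (mul_le_mul_of_nonneg_left h1 (hω0 k i)) (hΘpos i).le
    calc nrm (Θ ᵥ* Mbar k - Θ)
        ≤ ∑ l, ∑ i, Θ i * (ω k i * (S k i l + Pbar k i l)) :=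
          Finset.sum_le_sum fun l _ => habs l
      _ = ∑ i, Θ i * ω k i * 2 := by
          rw [Finset.sum_comm]
          refine Finset.sum_congr rfl fun i _ => ?_
          have : ∑ l, Θ i * (ω k i * (S k i l + Pbar k i l))
              = Θ i * ω k i * ∑ l, (S k i l + Pbar k i l) := by
            rw [Finset.mul_sum]
            exact Finset.sum_congr rfl fun l _ => by ring
          rw [this, Finset.sum_add_distrib, hSrow k hk i, hProw k hk i]
          norm_num
      _ ≤ ∑ i, Θ i * q ^ k * 2 := by
          refine Finset.sum_le_sum fun i _ => ?_
          have := hωq k i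
          have := (hΘpos i).le
          nlinarith
      _ = 2 * q ^ k := by
          rw [← Finset.sum_mul, ← Finset.sum_mul, hΘsum]
          ring
  -- accumulated error
  have herr : ∀ j, k₀ ≤ j → ∀ k, j ≤ k →
      nrm (Θ ᵥ* iProd Mbar j k - Θ) ≤ (2 / (1 - q)) * (q ^ j - q ^ k) := by
    intro j hj k hjk
    induction k, hjk using Nat.le_induction with
    | base =>
      rw [iProd_self, Matrix.vecMul_one, sub_self]
      simp [nrm]
    | succ k hk ih =>
      have hdec : Θ ᵥ* iProd Mbar j (k + 1) - Θ
          = ((Θ ᵥ* iProd Mbar j k - Θ) ᵥ* Mbar k) + (Θ ᵥ* Mbar k - Θ) := by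
        rw [iProd_succ Mbar hk, ← Matrix.vecMul_vecMul, Matrix.sub_vecMul]
        abel
      rw [hdec]
      have h1 := nrm_add_le ((Θ ᵥ* iProd Mbar j k - Θ) ᵥ* Mbar k) (Θ ᵥ* Mbar k - Θ)
      have h2 := nrm_vecMul_le (hMs k (hj.trans hk)) (Θ ᵥ* iProd Mbar j k - Θ)
      have h3 := hstep k (hj.trans hk)
      have hqk : (0:ℝ) < q ^ k := pow_pos hq0 k
      have h4 : (2 / (1 - q)) * (q ^ j - q ^ k) + 2 * q ^ k
          = (2 / (1 - q)) * (q ^ j - q ^ (k + 1)) := by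
        have h1q : (1:ℝ) - q ≠ 0 := by linarith
        field_simp
        ring
      linarith [ih]
  -- the interval matrices
  set Amat : ℕ → Matrix (Fin n) (Fin n) ℝ :=
    fun i => iProd Mbar (κ i) (κ (i + 1)) with hAmat
  have hκ1k₀ : k₀ ≤ κ 1 := hκ0.trans (hκle (by omega))
  have hκ11 : 1 ≤ κ 1 := by have := hκmono (show 0 < 1 by omega); omega
  have hIntFact : ∀ i, 1 ≤ i → ∀ t, κ i ≤ t → k₀ ≤ t ∧ 1 ≤ t := by
    intro i hi t ht
    have h1 : κ 1 ≤ κ i := hκle hi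
    exact ⟨le_trans (le_trans hκ1k₀ h1) ht, le_trans (le_trans hκ11 h1) ht⟩
  have hAstoch : ∀ i, 1 ≤ i → Stoch (Amat i) := by
    intro i hi
    exact Stoch.iProd (hκle (by omega)) fun t ht1 _ => hMs t (hIntFact i hi t ht1).1
  have hAnn : ∀ i, 1 ≤ i → AsyncAux.Nonneg (Amat i) := fun i hi => (hAstoch i hi).1
  have hAdiag : ∀ i, 1 ≤ i → ∀ a, 0 < Amat i a a := by
    intro i hi a
    refine iProd_diag_pos (hκle (by omega)) (fun t ht1 _ => ?_) a
    obtain ⟨h1, h2⟩ := hIntFact i hi t ht1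
    exact ⟨hMnn t h1, hMdiag t h1 h2⟩
  have hAconn : ∀ i, 1 ≤ i → Connected (Amat i) := by
    intro i hi R hRne hRuniv
    obtain ⟨c, hc⟩ := hRne
    obtain ⟨d, hd⟩ : ∃ d, d ∉ R := by
      by_contra h
      push_neg at h
      exact hRuniv (Finset.eq_univ_of_forall h)
    obtain ⟨m, _, hmpos⟩ := hirr i c d
    have hSPnn : AsyncAux.Nonneg (∑ k ∈ Finset.Ico (κ i) (κ (i + 1)), Pbar k) := by
      intro a b
      rw [Matrix.sum_apply]
      refine Finset.sum_nonneg fun t ht => ?_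
      exact hPnn t (hIntFact i hi t (Finset.mem_Ico.1 ht).1).1 a b
    obtain ⟨u, hu, v, hv, huv⟩ := crossing_of_pow hSPnn m R c d hc hd hmpos
    rw [Matrix.sum_apply] at huv
    have huv' : ∑ t ∈ Finset.Ico (κ i) (κ (i + 1)), (0:ℝ)
        < ∑ t ∈ Finset.Ico (κ i) (κ (i + 1)), Pbar t u v := by simpa using huv
    obtain ⟨t, htmem, hts⟩ := Finset.exists_lt_of_sum_lt huv'
    obtain ⟨ht1, ht2⟩ := Finset.mem_Ico.1 htmem
    obtain ⟨htk₀, ht1'⟩ := hIntFact i hi t ht1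
    refine ⟨u, hu, v, hv, ?_⟩
    refine iProd_entry_pos_of_exists (hκle (by omega)) (fun s hs1 _ => ?_) ht1 ht2
      (hMedge t htk₀ ht1' u v hts)
    obtain ⟨h1, h2⟩ := hIntFact i hi s hs1
    exact ⟨hMnn s h1, hMdiag s h1 h2⟩
  have hAγ : ∀ i, 1 ≤ i → ∀ a b, 0 < Amat i a b → γ ≤ Amat i a b := by
    intro i _ a b h
    exact hγlb i a b h
  -- blocks of n intervals: all entries at least γ^n
  have hblock : ∀ p, 1 ≤ p → ∀ a b,
      γ ^ n ≤ iProd Mbar (κ p) (κ (p + n)) a b := by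
    intro p hp a b
    have hcomp : iProd Amat p (p + n) = iProd Mbar (κ p) (κ (p + n)) :=
      iProd_comp Mbar κ hκmono.monotone (by omega)
    rw [← hcomp]
    have hfacts : ∀ i, p ≤ i → i < p + n →
        AsyncAux.Nonneg (Amat i) ∧ (∀ a, 0 < Amat i a a) ∧ Connected (Amat i) :=
      fun i h1 _ => ⟨hAnn i (hp.trans h1), hAdiag i (hp.trans h1), hAconn i (hp.trans h1)⟩
    have hpos := iProd_all_pos (show p ≤ p + n by omega) (by omega) hfacts a b
    have hlb := iProd_gamma_lb hγ.le (show p ≤ p + n by omega)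
      (fun i h1 h2 => ⟨(hfacts i h1 h2).1, hAγ i (hp.trans h1)⟩) a b hpos
    have : p + n - p = n := by omega
    rwa [this] at hlb
  have hblockStoch : ∀ p, 1 ≤ p → Stoch (iProd Mbar (κ p) (κ (p + n))) := by
    intro p hp
    exact Stoch.iProd (hκle (by omega)) fun t ht1 _ => hMs t (hIntFact p hp t ht1).1
  -- contraction rate
  set r : ℝ := 1 - n * γ ^ n with hrdef
  have hγn : (0:ℝ) < γ ^ n := pow_pos hγ n
  have hr0 : 0 ≤ r := by
    have hS := hblockStoch 1 le_rfl
    have hb := hblock 1 le_rfl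
    have i : Fin n := ⟨0, hn⟩
    have h1 : (n : ℝ) * γ ^ n = ∑ l : Fin n, γ ^ n := by
      rw [Finset.sum_const, Finset.card_univ, Fintype.card_fin, nsmul_eq_mul]
    have h2 : ∑ l : Fin n, γ ^ n ≤ ∑ l, iProd Mbar (κ 1) (κ (1 + n)) i l :=
      Finset.sum_le_sum fun l _ => hb i l
    rw [hS.2 i] at h2
    rw [hrdef]
    linarith [h1 ▸ h2]
  have hr1 : r < 1 := by
    rw [hrdef]
    have : (0:ℝ) < n * γ ^ n := by
      have : (0:ℝ) < n := by exact_mod_cast hn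
      positivity
    linarith
  -- iterated contraction
  have hcontr : ∀ p, 1 ≤ p → ∀ m (w : Fin n → ℝ), ∑ i, w i = 0 →
      nrm (w ᵥ* iProd Mbar (κ p) (κ (p + m * n))) ≤ r ^ m * nrm w := by
    intro p hp m
    induction m with
    | zero =>
      intro w _
      simp only [Nat.zero_mul, Nat.add_zero, iProd_self, Matrix.vecMul_one, pow_zero,
        one_mul, le_refl]
    | succ m ih =>
      intro w hw
      have harith : p + (m + 1) * n = (p + m * n) + n := by ring
      have hsplit : iProd Mbar (κ p) (κ (p + (m + 1) * n))
          = iProd Mbar (κ p) (κ (p + m * n))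
            * iProd Mbar (κ (p + m * n)) (κ ((p + m * n) + n)) := by
        rw [harith, iProd_mul Mbar (hκle (by omega)) (hκle (by omega))]
      rw [hsplit, ← Matrix.vecMul_vecMul]
      set w' := w ᵥ* iProd Mbar (κ p) (κ (p + m * n)) with hw'def
      have hQs : Stoch (iProd Mbar (κ p) (κ (p + m * n))) :=
        Stoch.iProd (hκle (by omega)) fun t ht1 _ => hMs t (hIntFact p hp t ht1).1
      have hw'sum : ∑ i, w' i = 0 := by
        rw [hw'def, sum_vecMul_eq hQs.2, hw]
      have h1 := nrm_contraction (hblockStoch (p + m * n) (by omega))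
        (le_of_lt hγn) (hblock (p + m * n) (by omega)) hw'sum
      calc nrm (w' ᵥ* iProd Mbar (κ (p + m * n)) (κ ((p + m * n) + n)))
          ≤ (1 - n * γ ^ n) * nrm w' := h1
        _ = r * nrm w' := by rw [hrdef]
        _ ≤ r * (r ^ m * nrm w) := mul_le_mul_of_nonneg_left (ih w hw) hr0
        _ = r ^ (m + 1) * nrm w := by ring
  -- main convergence
  intro i0
  rw [Metric.tendsto_atTop]
  intro ε hε
  set C : ℝ := 2 / (1 - q) with hCdef
  have hC0 : 0 < C := by
    rw [hCdef]
    have : (0:ℝ) < 1 - q := by linarith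
    positivity
  obtain ⟨m, hm⟩ := exists_pow_lt_of_lt_one (show (0:ℝ) < ε / 4 by linarith) hr1
  obtain ⟨p₀, hp₀⟩ := exists_pow_lt_of_lt_one
    (show (0:ℝ) < ε / (4 * C) by positivity) hq1
  set p : ℕ := max p₀ 1 with hpdef
  have hp1 : 1 ≤ p := le_max_right _ _
  set j : ℕ := κ p with hjdef
  set N : ℕ := κ (p + m * n) with hNdef
  have hjk₀ : k₀ ≤ j := hκ0.trans (hκle (by omega))
  have hjN : j ≤ N := hκle (by omega)
  refine ⟨N, fun k hk => ?_⟩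
  have hNk₀ : k₀ ≤ N := hjk₀.trans hjN
  have hjk : j ≤ k := hjN.trans hk
  -- y_j
  set yj : Fin n → ℝ := x ᵥ* iProd Mbar k₀ j with hyjdef
  have hQk₀j : Stoch (iProd Mbar k₀ j) :=
    Stoch.iProd hjk₀ fun t ht1 _ => hMs t ht1
  have hyj := stoch_vec_vecMul hQk₀j hxnn hxsum
  set w : Fin n → ℝ := yj - Θ with hwdef
  have hwsum : ∑ i, w i = 0 := by
    rw [hwdef]
    simp only [Pi.sub_apply, Finset.sum_sub_distrib, hyjdef, hyj.2, hΘsum, sub_self]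
  have hwnrm : nrm w ≤ 2 := by
    rw [hwdef]
    have h1 : ∀ i, |(yj - Θ) i| ≤ |yj i| + |Θ i| := fun i => abs_sub _ _
    calc nrm (yj - Θ) ≤ ∑ i, (|yj i| + |Θ i|) := Finset.sum_le_sum fun i _ => h1 i
      _ = ∑ i, |yj i| + ∑ i, |Θ i| := Finset.sum_add_distrib
      _ = ∑ i, yj i + ∑ i, Θ i := by
          rw [Finset.sum_congr rfl fun i _ => abs_of_nonneg (hyj.1 i),
            Finset.sum_congr rfl fun i _ => abs_of_nonneg (hΘpos i).le]
      _ = 2 := by rw [hyj.2, hΘsum]; norm_num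
  -- decomposition
  have hyk : x ᵥ* iProd Mbar k₀ k
      = ((w ᵥ* iProd Mbar j N) ᵥ* iProd Mbar N k) + Θ ᵥ* iProd Mbar j k := by
    have h1 : (w ᵥ* iProd Mbar j N) ᵥ* iProd Mbar N k = w ᵥ* iProd Mbar j k := by
      rw [Matrix.vecMul_vecMul, iProd_mul Mbar hjN hk]
    have hwΘ : w + Θ = yj := by rw [hwdef]; simp
    have h2 : x ᵥ* iProd Mbar k₀ k = yj ᵥ* iProd Mbar j k := by
      rw [hyjdef, Matrix.vecMul_vecMul, iProd_mul Mbar hjk₀ hjk]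
    rw [h1, ← Matrix.add_vecMul, hwΘ, h2]
  -- term 1 bound
  have hQNk : Stoch (iProd Mbar N k) :=
    Stoch.iProd hk fun t ht1 _ => hMs t (hNk₀.trans ht1)
  have hterm1 : nrm ((w ᵥ* iProd Mbar j N) ᵥ* iProd Mbar N k) ≤ r ^ m * 2 := by
    calc nrm ((w ᵥ* iProd Mbar j N) ᵥ* iProd Mbar N k)
        ≤ nrm (w ᵥ* iProd Mbar j N) := nrm_vecMul_le hQNk _
      _ ≤ r ^ m * nrm w := hcontr p hp1 m w hwsum
      _ ≤ r ^ m * 2 := mul_le_mul_of_nonneg_left hwnrm (pow_nonneg hr0 m)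
  -- term 2 bound
  have hterm2 : nrm (Θ ᵥ* iProd Mbar j k - Θ) ≤ C * q ^ p₀ := by
    have h1 := herr j hjk₀ k hjk
    have h2 : q ^ j ≤ q ^ p₀ := by
      have hpj : p₀ ≤ j := by
        have h3 : p ≤ κ p := hκmono.le_apply
        have h4 : p₀ ≤ p := le_max_left _ _
        omega
      exact pow_le_pow_of_le_one hq0.le hq1.le hpj
    have hqk : (0:ℝ) < q ^ k := pow_pos hq0 k
    calc nrm (Θ ᵥ* iProd Mbar j k - Θ) ≤ C * (q ^ j - q ^ k) := h1
      _ ≤ C * q ^ j := by nlinarith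
      _ ≤ C * q ^ p₀ := mul_le_mul_of_nonneg_left h2 hC0.le
  -- combine
  have hfinal : nrm (x ᵥ* iProd Mbar k₀ k - Θ) < ε := by
    have hdec2 : x ᵥ* iProd Mbar k₀ k - Θ
        = ((w ᵥ* iProd Mbar j N) ᵥ* iProd Mbar N k) + (Θ ᵥ* iProd Mbar j k - Θ) := by
      rw [hyk]; abel
    rw [hdec2]
    have h5 := nrm_add_le ((w ᵥ* iProd Mbar j N) ᵥ* iProd Mbar N k)
      (Θ ᵥ* iProd Mbar j k - Θ)
    have h6 : C * q ^ p₀ < C * (ε / (4 * C)) :=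
      mul_lt_mul_of_pos_left hp₀ hC0
    have hCne : C ≠ 0 := ne_of_gt hC0
    have h7 : C * (ε / (4 * C)) = ε / 4 := by field_simp
    have h8 : r ^ m * 2 < ε / 4 * 2 := by nlinarith [hm]
    linarith
  have habs : |(x ᵥ* iProd Mbar k₀ k) i0 - Θ i0| ≤ nrm (x ᵥ* iProd Mbar k₀ k - Θ) := by
    have := abs_le_nrm (x ᵥ* iProd Mbar k₀ k - Θ) i0
    simpa using this
  have : dist ((x ᵥ* ((List.range (k - k₀)).map (fun t => Mbar (k₀ + t))).prod) i0)
      (Θ i0) = |(x ᵥ* iProd Mbar k₀ k) i0 - Θ i0| := by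
    rw [Real.dist_eq]
    rfl
  rw [this]
  exact lt_of_le_of_lt habs hfinal
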